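/- Let G be a dart-free graph containing an induced complement of a cycle C_k with k ≥ 7, say H with vertices v_1,...,v_k (non-edges v_i v_{i+1}, indices mod k), such that H⁺ is nonempty, and let x ∈ H⁺. Then k is even, and the neighborhood of x in H is exactly {v_1, v_3, ..., v_{k-1}} or exactly {v_2, v_4, ..., v_k}. -/

import Mathlib

open SimpleGraph
open Fin.NatCast

/-- The dart: vertices a,b,c,d,e = 0,1,2,3,4; edges ab, ac, ad, bd, cd, de. -/
def dartGraph : SimpleGraph (Fin 5) :=
  SimpleGraph.fromEdgeSet {s(0,1), s(0,2), s(0,3), s(1,3), s(2,3), s(3,4)}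

/-- The bull: vertices a,b,c,d,e = 0,1,2,3,4; edges ab, bc, cd, be, ce. -/
def bullGraph : SimpleGraph (Fin 5) :=
  SimpleGraph.fromEdgeSet {s(0,1), s(1,2), s(2,3), s(1,4), s(2,4)}

/-- The house: C4 on v1..v4 = 0..3 plus v5 = 4 adjacent to v2 = 1 and v3 = 2. -/
def houseGraph : SimpleGraph (Fin 5) :=
  SimpleGraph.fromEdgeSet {s(0,1), s(1,2), s(2,3), s(3,0), s(4,1), s(4,2)}

/-- Anti-neighborhood of a vertex: all vertices distinct from and nonadjacent to `v`. -/
def vertexAnti {V : Type*} (G : SimpleGraph V) (v : V) : Set V :=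
  {u | u ≠ v ∧ ¬ G.Adj v u}

/-- Anti-neighborhood of a set `S`: vertices outside `S` with no neighbor in `S`. -/
def antiNbhd {V : Type*} (G : SimpleGraph V) (S : Set V) : Set V :=
  {v | v ∉ S ∧ ∀ u ∈ S, ¬ G.Adj v u}

/-- Contact vertices of `S`: outside `S`, with a neighbor in `S` and a neighbor in `antiNbhd G S`. -/
def contactSet {V : Type*} (G : SimpleGraph V) (S : Set V) : Set V :=
  {v | v ∉ S ∧ (∃ u ∈ S, G.Adj v u) ∧ ∃ w ∈ antiNbhd G S, G.Adj v w}

/-- `G` has a clique cutset: a clique whose removal disconnects the graph. -/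
def HasCliqueCutset {V : Type*} (G : SimpleGraph V) : Prop :=
  ∃ C : Set V, G.IsClique C ∧ ¬ (G.induce Cᶜ).Preconnected

/-- `U` is a module: no outside vertex distinguishes two vertices of `U`. -/
def IsModule {V : Type*} (G : SimpleGraph V) (U : Set V) : Prop :=
  ∀ z ∉ U, (∀ x ∈ U, G.Adj z x) ∨ (∀ x ∈ U, ¬ G.Adj z x)

/-- `G` is prime: all its modules are trivial. -/
def IsPrime {V : Type*} (G : SimpleGraph V) : Prop :=
  ∀ U : Set V, IsModule G U → U = ∅ ∨ (∃ x, U = {x}) ∨ U = Set.univ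

/-- `G` is perfect: every induced subgraph has chromatic number equal to clique number. -/
def IsPerfect {V : Type*} (G : SimpleGraph V) : Prop :=
  ∀ s : Set V, (G.induce s).chromaticNumber = ((G.induce s).cliqueNum : ℕ∞)

/-- Distance from a vertex to a set of vertices. -/
noncomputable def setDist {V : Type*} (G : SimpleGraph V) (v : V) (S : Set V) : ℕ :=
  sInf {n | ∃ u ∈ S, n = G.dist v u}


lemma noDartConfig {V : Type*} {G : SimpleGraph V} (hdart : IsEmpty (dartGraph ↪g G))
    {a b c d e : V} (hbc : b ≠ c) (hae : a ≠ e) (hbe : b ≠ e) (hce : c ≠ e)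
    (ab : G.Adj a b) (ac : G.Adj a c) (ad : G.Adj a d) (bd : G.Adj b d)
    (cd : G.Adj c d) (de : G.Adj d e)
    (nbc : ¬ G.Adj b c) (nae : ¬ G.Adj a e) (nbe : ¬ G.Adj b e) (nce : ¬ G.Adj c e) : False := by
  have nbc' : ¬ G.Adj c b := fun h => nbc h.symm
  have nae' : ¬ G.Adj e a := fun h => nae h.symm
  have nbe' : ¬ G.Adj e b := fun h => nbe h.symm
  have nce' : ¬ G.Adj e c := fun h => nce h.symm
  refine hdart.false ⟨⟨![a,b,c,d,e], ?_⟩, ?_⟩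
  · intro i j hij
    fin_cases i <;> fin_cases j <;>
      first
      | rfl
      | (exfalso; revert hij;
         simp [ab.ne, ac.ne, ad.ne, bd.ne, cd.ne, de.ne, ab.ne', ac.ne', ad.ne', bd.ne', cd.ne',
           de.ne', hbc, hae, hbe, hce, hbc.symm, hae.symm, hbe.symm, hce.symm])
  · intro i j
    change G.Adj (![a,b,c,d,e] i) (![a,b,c,d,e] j) ↔ dartGraph.Adj i j
    fin_cases i <;> fin_cases j <;>
      simp [dartGraph, Sym2.eq_iff, ab, ab.symm, ac, ac.symm, ad, ad.symm, bd, bd.symm,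
        cd, cd.symm, de, de.symm, nbc, nae, nbe, nce, nbc', nae', nbe', nce', G.irrefl]

lemma castNe {k : ℕ} [NeZero k] {a b : ℕ} (hab : a < b) (hb : b < a + k) :
    (a : Fin k) ≠ (b : Fin k) := by
  intro h
  have h2 : a % k = b % k := by
    have := congrArg Fin.val h
    simpa [Fin.val_natCast] using this
  have h3 : k ∣ b - a := (Nat.modEq_iff_dvd' (le_of_lt hab)).mp h2
  have h4 := Nat.le_of_dvd (by omega) h3
  omega

lemma castSucc' {m : ℕ} (n : ℕ) : ((n : Fin (m+2))) + 1 = ((n + 1 : ℕ) : Fin (m+2)) := by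
  push_cast; ring

lemma castMod {m : ℕ} (n : ℕ) : ((n % (m+2) : ℕ) : Fin (m+2)) = (n : Fin (m+2)) := by
  rw [Fin.ext_iff, Fin.val_natCast, Fin.val_natCast, Nat.mod_mod_of_dvd n dvd_rfl]

lemma complCycleAdj {m : ℕ} (i j : Fin (m+2)) :
    ((cycleGraph (m+2))ᶜ).Adj i j ↔ i ≠ j ∧ i ≠ j + 1 ∧ j ≠ i + 1 := by
  rw [compl_adj, cycleGraph_adj]
  have e1 : i - j = 1 ↔ i = j + 1 := sub_eq_iff_eq_add.trans (by rw [add_comm 1])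
  have e2 : j - i = 1 ↔ j = i + 1 := sub_eq_iff_eq_add.trans (by rw [add_comm 1])
  rw [e1, e2]
  tauto


theorem stmt2 {V : Type*} [Fintype V] (G : SimpleGraph V)
    (hdart : IsEmpty (dartGraph ↪g G))
    (k : ℕ) (hk : 7 ≤ k) (f : (cycleGraph k)ᶜ ↪g G)
    (hplus : (contactSet G (Set.range f)).Nonempty)
    (x : V) (hx : x ∈ contactSet G (Set.range f)) :
    Even k ∧
      ((∀ j : Fin k, G.Adj x (f j) ↔ Odd (j : ℕ)) ∨
        (∀ j : Fin k, G.Adj x (f j) ↔ Even (j : ℕ))) := by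
  obtain ⟨m, rfl⟩ : ∃ m, k = m + 2 := ⟨k - 2, by omega⟩
  obtain ⟨hxS, ⟨u, ⟨i0, rfl⟩, hxu⟩, w, ⟨hwS, hwA⟩, hxw⟩ := hx
  have hfa : ∀ i j : Fin (m+2), G.Adj (f i) (f j) ↔ i ≠ j ∧ i ≠ j + 1 ∧ j ≠ i + 1 :=
    fun i j => f.map_adj_iff.trans (complCycleAdj i j)
  have hxf : ∀ i, x ≠ f i := fun i h => hxS ⟨i, h.symm⟩
  have hfw : ∀ i, f i ≠ w := fun i h => hwS ⟨i, h⟩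
  have hwnf : ∀ i, ¬ G.Adj w (f i) := fun i => hwA (f i) ⟨i, rfl⟩
  have D1 : ∀ a b : ℕ, G.Adj x (f b) → G.Adj x (f (b+1 : ℕ)) → G.Adj x (f a) →
      ((a : Fin (m+2)) ≠ b) → ((a : Fin (m+2)) ≠ (b+1 : ℕ)) → ((a : Fin (m+2)) ≠ (b+1+1 : ℕ)) →
      ((b : Fin (m+2)) ≠ (a+1 : ℕ)) → False := by
    intro a b hb hb1 ha h1 h2 h3 h4
    refine noDartConfig hdart (a := f a) (b := f b) (c := f (b+1 : ℕ)) (d := x) (e := w)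
      (f.injective.ne (castNe (by omega) (by omega)))
      (hfw _) (hfw _) (hfw _)
      ((hfa _ _).mpr ⟨h1, by rw [castSucc']; exact h2, by rw [castSucc']; exact h4⟩)
      ((hfa _ _).mpr ⟨h2, by rw [castSucc']; exact h3,
        fun h => h1 (add_right_cancel (b := (1 : Fin (m+2)))
          (show (a : Fin (m+2)) + 1 = (b : Fin (m+2)) + 1 by rw [castSucc' b]; exact h.symm))⟩)
      ha.symm hb.symm hb1.symm hxw
      (fun h => ((hfa _ _).mp h).2.2 (castSucc' b).symm)
      (fun h => hwnf _ h.symm) (fun h => hwnf _ h.symm) (fun h => hwnf _ h.symm)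
  have D2 : ∀ a b d : ℕ, ¬ G.Adj x (f (a : ℕ)) → ¬ G.Adj x (f (b : ℕ)) → ¬ G.Adj x (f (b+1 : ℕ)) →
      G.Adj x (f (d : ℕ)) →
      ((a : Fin (m+2)) ≠ b) → ((a : Fin (m+2)) ≠ (b+1 : ℕ)) → ((a : Fin (m+2)) ≠ (b+1+1 : ℕ)) →
      ((b : Fin (m+2)) ≠ (a+1 : ℕ)) →
      ((a : Fin (m+2)) ≠ d) → ((a : Fin (m+2)) ≠ (d+1 : ℕ)) → ((d : Fin (m+2)) ≠ (a+1 : ℕ)) →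
      ((d : Fin (m+2)) ≠ b) → ((d : Fin (m+2)) ≠ (b+1 : ℕ)) → ((d : Fin (m+2)) ≠ (b+1+1 : ℕ)) →
      ((b : Fin (m+2)) ≠ (d+1 : ℕ)) → False := by
    intro a b d hna hnb hnb1 hd h1 h2 h3 h4 h5 h6 h7 h8 h9 h10 h11
    refine noDartConfig hdart (a := f (a : ℕ)) (b := f (b : ℕ)) (c := f (b+1 : ℕ))
      (d := f (d : ℕ)) (e := x)
      (f.injective.ne (castNe (by omega) (by omega)))
      (hxf _).symm (hxf _).symm (hxf _).symm
      ((hfa _ _).mpr ⟨h1, by rw [castSucc' b]; exact h2, by rw [castSucc' a]; exact h4⟩)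
      ((hfa _ _).mpr ⟨h2, by rw [castSucc' (b+1)]; exact h3,
        fun h => h1 (add_right_cancel (b := (1 : Fin (m+2)))
          (show (a : Fin (m+2)) + 1 = (b : Fin (m+2)) + 1 by rw [castSucc' b]; exact h.symm))⟩)
      ((hfa _ _).mpr ⟨h5, by rw [castSucc' d]; exact h6, by rw [castSucc' a]; exact h7⟩)
      ((hfa _ _).mpr ⟨fun h => h8 h.symm, by rw [castSucc' d]; exact h11,
        by rw [castSucc' b]; exact h9⟩)
      ((hfa _ _).mpr ⟨fun h => h9 h.symm,
        fun h => h8 (add_right_cancel (b := (1 : Fin (m+2)))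
          (show (d : Fin (m+2)) + 1 = (b : Fin (m+2)) + 1 by rw [castSucc' b]; exact h.symm)),
        by rw [castSucc' (b+1)]; exact h10⟩)
      hd.symm
      (fun h => ((hfa _ _).mp h).2.2 (castSucc' b).symm)
      (fun h => hna h.symm) (fun h => hnb h.symm) (fun h => hnb1 h.symm)
  have D3 : ∀ t d : ℕ, G.Adj x (f (t : ℕ)) → ¬ G.Adj x (f (t+1 : ℕ)) → ¬ G.Adj x (f (t+1+1 : ℕ)) →
      G.Adj x (f (d : ℕ)) →
      ((d : Fin (m+2)) ≠ t) → ((d : Fin (m+2)) ≠ (t+1 : ℕ)) → ((d : Fin (m+2)) ≠ (t+1+1 : ℕ)) →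
      ((d : Fin (m+2)) ≠ (t+1+1+1 : ℕ)) → ((t : Fin (m+2)) ≠ (d+1 : ℕ)) → False := by
    intro t d ht hnt1 hnt2 hd h1 h2 h3 h4 h5
    refine noDartConfig hdart (a := f (t : ℕ)) (b := x) (c := f (t+1+1 : ℕ))
      (d := f (d : ℕ)) (e := f (t+1 : ℕ))
      (hxf _) (f.injective.ne (castNe (by omega) (by omega)))
      (hxf _) (f.injective.ne (castNe (by omega) (by omega)).symm)
      ht.symm
      ((hfa _ _).mpr ⟨castNe (by omega) (by omega),
        by rw [castSucc' (t+1+1)]; exact castNe (by omega) (by omega),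
        by rw [castSucc' t]; exact (castNe (by omega) (by omega)).symm⟩)
      ((hfa _ _).mpr ⟨fun h => h1 h.symm, by rw [castSucc' d]; exact h5,
        by rw [castSucc' t]; exact h2⟩)
      hd
      ((hfa _ _).mpr ⟨fun h => h3 h.symm,
        fun h => h2 (add_right_cancel (b := (1 : Fin (m+2)))
          (show (d : Fin (m+2)) + 1 = ((t+1 : ℕ) : Fin (m+2)) + 1 by
            rw [castSucc' (t+1)]; exact h.symm)),
        by rw [castSucc' (t+1+1)]; exact h4⟩)
      ((hfa _ _).mpr ⟨h2, by rw [castSucc' (t+1)]; exact h3,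
        fun h => h1 (add_right_cancel (b := (1 : Fin (m+2)))
          (show (d : Fin (m+2)) + 1 = (t : Fin (m+2)) + 1 by rw [castSucc' t]; exact h.symm))⟩)
      hnt2
      (fun h => ((hfa _ _).mp h).2.2 (castSucc' t).symm)
      hnt1
      (fun h => ((hfa _ _).mp h).2.1 (castSucc' (t+1)).symm)
  -- No two consecutive neighbors
  have hC : ∀ n : ℕ, G.Adj x (f (n : ℕ)) → G.Adj x (f (n+1 : ℕ)) → False := by
    intro n hn hn1
    by_cases h8 : 8 ≤ m + 2
    · have w3 : ¬ G.Adj x (f (n+3 : ℕ)) := by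
        intro h
        refine D1 (n+3) n hn hn1 h ?_ ?_ ?_ ?_ <;>
          first
          | exact castNe (by omega) (by omega)
          | exact (castNe (by omega) (by omega)).symm
      have w4 : ¬ G.Adj x (f (n+3+1 : ℕ)) := by
        intro h
        refine D1 (n+3+1) n hn hn1 h ?_ ?_ ?_ ?_ <;>
          first
          | exact castNe (by omega) (by omega)
          | exact (castNe (by omega) (by omega)).symm
      have w6 : ¬ G.Adj x (f (n+6 : ℕ)) := by
        intro h
        refine D1 (n+6) n hn hn1 h ?_ ?_ ?_ ?_ <;>
          first
          | exact castNe (by omega) (by omega)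
          | exact (castNe (by omega) (by omega)).symm
      refine D2 (n+6) (n+3) n w6 w3 w4 hn ?_ ?_ ?_ ?_ ?_ ?_ ?_ ?_ ?_ ?_ ?_ <;>
        first
        | exact castNe (by omega) (by omega)
        | exact (castNe (by omega) (by omega)).symm
    · by_cases h2 : G.Adj x (f (n+1+1 : ℕ))
      · have w3 : ¬ G.Adj x (f (n+1+1+1 : ℕ)) := by
          intro h
          refine D1 (n+1+1+1) n hn hn1 h ?_ ?_ ?_ ?_ <;>
            first
            | exact castNe (by omega) (by omega)
            | exact (castNe (by omega) (by omega)).symm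
        have w4 : ¬ G.Adj x (f (n+1+1+1+1 : ℕ)) := by
          intro h
          refine D1 (n+1+1+1+1) n hn hn1 h ?_ ?_ ?_ ?_ <;>
            first
            | exact castNe (by omega) (by omega)
            | exact (castNe (by omega) (by omega)).symm
        refine D3 (n+1+1) n h2 w3 w4 hn ?_ ?_ ?_ ?_ ?_ <;>
          first
          | exact castNe (by omega) (by omega)
          | exact (castNe (by omega) (by omega)).symm
      · have w4 : ¬ G.Adj x (f (n+4 : ℕ)) := by
          intro h
          refine D1 (n+4) n hn hn1 h ?_ ?_ ?_ ?_ <;>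
            first
            | exact castNe (by omega) (by omega)
            | exact (castNe (by omega) (by omega)).symm
        have w5 : ¬ G.Adj x (f (n+4+1 : ℕ)) := by
          intro h
          refine D1 (n+4+1) n hn hn1 h ?_ ?_ ?_ ?_ <;>
            first
            | exact castNe (by omega) (by omega)
            | exact (castNe (by omega) (by omega)).symm
        refine D2 (n+1+1) (n+4) n h2 w4 w5 hn ?_ ?_ ?_ ?_ ?_ ?_ ?_ ?_ ?_ ?_ ?_ <;>
          first
          | exact castNe (by omega) (by omega)
          | exact (castNe (by omega) (by omega)).symm
  -- Every neighbor propagates two steps around the cycle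
  have hS2 : ∀ n : ℕ, G.Adj x (f (n : ℕ)) → G.Adj x (f (n+1+1 : ℕ)) := by
    intro n hn
    by_contra h2
    have h1 : ¬ G.Adj x (f (n+1 : ℕ)) := fun h => hC n hn h
    have w4 : ¬ G.Adj x (f (n+1+1+1+1 : ℕ)) := by
      intro h
      refine D3 n (n+1+1+1+1) hn h1 h2 h ?_ ?_ ?_ ?_ ?_ <;>
        first
        | exact castNe (by omega) (by omega)
        | exact (castNe (by omega) (by omega)).symm
    have w5 : ¬ G.Adj x (f (n+1+1+1+1+1 : ℕ)) := by
      intro h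
      refine D3 n (n+1+1+1+1+1) hn h1 h2 h ?_ ?_ ?_ ?_ ?_ <;>
        first
        | exact castNe (by omega) (by omega)
        | exact (castNe (by omega) (by omega)).symm
    by_cases h3 : G.Adj x (f (n+1+1+1 : ℕ))
    · refine D3 (n+1+1+1) n h3 w4 w5 hn ?_ ?_ ?_ ?_ ?_ <;>
        first
        | exact castNe (by omega) (by omega)
        | exact (castNe (by omega) (by omega)).symm
    · refine D2 (n+1+1+1+1+1) (n+1+1) n w5 h2 h3 hn ?_ ?_ ?_ ?_ ?_ ?_ ?_ ?_ ?_ ?_ ?_ <;>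
        first
        | exact castNe (by omega) (by omega)
        | exact (castNe (by omega) (by omega)).symm
  have h2all : ∀ n j : ℕ, G.Adj x (f (n : ℕ)) → G.Adj x (f (n + 2*j : ℕ)) := by
    intro n j hn
    induction j with
    | zero => simpa using hn
    | succ j ih =>
      have h := hS2 (n + 2*j) ih
      have e : n + 2*(j+1) = n + 2*j + 1 + 1 := by ring
      rw [e]; exact h
  set n0 : ℕ := (i0 : ℕ) with hn0def
  have hn0 : G.Adj x (f (n0 : ℕ)) := by
    rw [hn0def, Fin.cast_val_eq_self]; exact hxu
  have hEv : Even (m+2) := by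
    by_contra hodd
    have hmod : (m+2) % 2 = 1 := Nat.odd_iff.mp (Nat.not_even_iff_odd.mp hodd)
    have h1 := h2all n0 ((m+3)/2) hn0
    have e : n0 + 2*((m+3)/2) = (n0+1) + (m+2) := by omega
    rw [e] at h1
    have e2 : (((n0+1) + (m+2) : ℕ) : Fin (m+2)) = ((n0+1 : ℕ) : Fin (m+2)) := by
      rw [Nat.cast_add, Fin.natCast_self, add_zero]
    rw [e2] at h1
    exact hC n0 hn0 h1
  have hdvd : 2 ∣ m + 2 := hEv.two_dvd
  have hm2 : (m+2) % 2 = 0 := Nat.even_iff.mp hEv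
  have htrans : ∀ n j : ℕ, G.Adj x (f (n : ℕ)) → n % 2 = j % 2 → G.Adj x (f (j : ℕ)) := by
    intro n j hn hp
    have hn' : G.Adj x (f ((n % (m+2) : ℕ) : ℕ)) := by rw [castMod]; exact hn
    have p1 : n % (m+2) % 2 = n % 2 := Nat.mod_mod_of_dvd n hdvd
    have p2 : j % (m+2) % 2 = j % 2 := Nat.mod_mod_of_dvd j hdvd
    have b1 : n % (m+2) < m+2 := Nat.mod_lt _ (by omega)
    have b2 : j % (m+2) < m+2 := Nat.mod_lt _ (by omega)
    obtain ⟨t, ht⟩ : ∃ t, n % (m+2) + 2*t = j % (m+2) + (m+2) :=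
      ⟨(j % (m+2) + (m+2) - n % (m+2))/2, by omega⟩
    have h := h2all (n % (m+2)) t hn'
    rw [ht] at h
    have e2 : ((j % (m+2) + (m+2) : ℕ) : Fin (m+2)) = ((j : ℕ) : Fin (m+2)) := by
      rw [Nat.cast_add, Fin.natCast_self, add_zero, castMod]
    rwa [e2] at h
  refine ⟨hEv, ?_⟩
  rcases Nat.even_or_odd n0 with hpar | hpar
  · right
    intro j
    constructor
    · intro hj
      rw [← Fin.cast_val_eq_self j] at hj
      by_contra hje
      have hjo : Odd (j : ℕ) := Nat.not_even_iff_odd.mp hje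
      have := htrans (j : ℕ) (n0+1) hj (by
        rcases hpar with ⟨t, ht⟩; rcases hjo with ⟨t2, ht2⟩; omega)
      exact hC n0 hn0 this
    · intro hje
      have := htrans n0 (j : ℕ) hn0 (by
        rcases hpar with ⟨t, ht⟩; rcases hje with ⟨t2, ht2⟩; omega)
      rwa [Fin.cast_val_eq_self] at this
  · left
    intro j
    constructor
    · intro hj
      rw [← Fin.cast_val_eq_self j] at hj
      by_contra hje
      have hjo : Even (j : ℕ) := Nat.not_odd_iff_even.mp hje
      have := htrans (j : ℕ) (n0+1) hj (by
        rcases hpar with ⟨t, ht⟩; rcases hjo with ⟨t2, ht2⟩; omega)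
      exact hC n0 hn0 this
    · intro hje
      have := htrans n0 (j : ℕ) hn0 (by
        rcases hpar with ⟨t, ht⟩; rcases hje with ⟨t2, ht2⟩; omega)
      rwa [Fin.cast_val_eq_self] at this
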